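/- arXiv:1602.01010 — 5 statements merged into one kernel-verified Lean document; each statement's English description precedes it below -/
import Mathlib

section
/- Let k be a field of characteristic not 2 and let α ∈ k^× be a sum of n+1 squares in k. Then in GW(k), 2^n⟨α⟩ = 2^n⟨1⟩. -/
/-- The relations ideal defining the Grothendieck–Witt ring of a field `k`
(characteristic ≠ 2) by its standard presentation: generators `⟨a⟩` for
`a ∈ kˣ` (multiplicative via the group algebra), with relations
`⟨a²⟩ = 1` and the chain relation `⟨a⟩ + ⟨b⟩ = ⟨a+b⟩ + ⟨(a+b)ab⟩` when `a + b ≠ 0`. -/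
noncomputable def GWIdeal (k : Type) [Field k] : Ideal (MonoidAlgebra ℤ kˣ) :=
  Ideal.span { x | (∃ a : kˣ, x = MonoidAlgebra.of ℤ kˣ (a * a) - 1) ∨
    (∃ a b c : kˣ, ((a : k) + (b : k) = (c : k)) ∧
      x = MonoidAlgebra.of ℤ kˣ a + MonoidAlgebra.of ℤ kˣ b
        - MonoidAlgebra.of ℤ kˣ c - MonoidAlgebra.of ℤ kˣ (c * a * b)) }

/-- The Grothendieck–Witt ring of a field `k` of characteristic ≠ 2. -/
def GW (k : Type) [Field k] : Type := MonoidAlgebra ℤ kˣ ⧸ GWIdeal k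

noncomputable instance (k : Type) [Field k] : CommRing (GW k) :=
  Ideal.Quotient.commRing (GWIdeal k)

/-- The class `⟨a⟩` of the one-dimensional quadratic form `x ↦ a x²` in `GW k`. -/
noncomputable def GWform (k : Type) [Field k] (a : kˣ) : GW k :=
  Ideal.Quotient.mk (GWIdeal k) (MonoidAlgebra.of ℤ kˣ a)

lemma GWform_mul (k : Type) [Field k] (a b : kˣ) :
    GWform k (a * b) = GWform k a * GWform k b := by
  unfold GWform; rw [map_mul, map_mul]; rfl

lemma GWform_one (k : Type) [Field k] : GWform k 1 = 1 := by
  unfold GWform; rw [map_one, map_one]; rfl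

lemma GWform_sq (k : Type) [Field k] (a : kˣ) : GWform k (a * a) = 1 := by
  have h : MonoidAlgebra.of ℤ kˣ (a * a) - 1 ∈ GWIdeal k :=
    Ideal.subset_span (Or.inl ⟨a, rfl⟩)
  have h2 := Ideal.Quotient.eq_zero_iff_mem.mpr h
  rw [map_sub, map_one] at h2
  exact sub_eq_zero.mp h2

lemma GWform_chain (k : Type) [Field k] (a b c : kˣ) (h : (a : k) + (b : k) = (c : k)) :
    GWform k a + GWform k b = GWform k c + GWform k (c * a * b) := by
  have hm : MonoidAlgebra.of ℤ kˣ a + MonoidAlgebra.of ℤ kˣ b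
      - MonoidAlgebra.of ℤ kˣ c - MonoidAlgebra.of ℤ kˣ (c * a * b) ∈ GWIdeal k :=
    Ideal.subset_span (Or.inr ⟨a, b, c, h, rfl⟩)
  have h2 := Ideal.Quotient.eq_zero_iff_mem.mpr hm
  rw [map_sub, map_sub, map_add] at h2
  unfold GWform
  rw [sub_sub, sub_eq_zero] at h2
  exact h2

/-- If `α ∈ kˣ` is a sum of `n + 1` squares in a field `k` of characteristic ≠ 2,
then `2ⁿ⟨α⟩ = 2ⁿ⟨1⟩` in `GW(k)`. -/
theorem stmt1 (k : Type) [Field k] (h2 : (2 : k) ≠ 0) (n : ℕ) (α : kˣ)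
    (hα : ∃ x : Fin (n + 1) → k, (α : k) = ∑ i, x i ^ 2) :
    (2 ^ n : ℤ) • GWform k α = (2 ^ n : ℤ) • GWform k 1 := by
  induction n generalizing α with
  | zero =>
    obtain ⟨x, hx⟩ := hα
    rw [Fin.sum_univ_one] at hx
    have hx0 : x 0 ≠ 0 := by
      intro h; exact α.ne_zero (by rw [hx, h]; ring)
    have : α = Units.mk0 (x 0) hx0 * Units.mk0 (x 0) hx0 := by
      ext; rw [Units.val_mul, Units.val_mk0, hx]; ring
    rw [this, GWform_sq, GWform_one]
  | succ n ih =>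
    obtain ⟨x, hx⟩ := hα
    rw [Fin.sum_univ_castSucc] at hx
    set β := ∑ i : Fin (n + 1), x i.castSucc ^ 2 with hβdef
    by_cases hβ : β = 0
    · have hxl : x (Fin.last (n + 1)) ≠ 0 := by
        intro h; exact α.ne_zero (by rw [hx, hβ, h]; ring)
      have : α = Units.mk0 _ hxl * Units.mk0 _ hxl := by
        ext; rw [Units.val_mul, Units.val_mk0, hx, hβ]; ring
      rw [this, GWform_sq, GWform_one]
    · have hIH := ih (Units.mk0 β hβ) ⟨fun i => x i.castSucc, rfl⟩
      by_cases hxl : x (Fin.last (n + 1)) = 0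
      · have hαβ : α = Units.mk0 β hβ := by
          ext; rw [Units.val_mk0, hx, hxl]; ring
        rw [hαβ, pow_succ, mul_comm, mul_smul, mul_smul, hIH]
      · set u := Units.mk0 (x (Fin.last (n + 1))) hxl with hu
        have hc := GWform_chain k (Units.mk0 β hβ) (u * u) α
          (by rw [Units.val_mul]; simp [hu, hx]; ring)
        rw [GWform_sq] at hc
        have hm : GWform k (α * Units.mk0 β hβ * (u * u))
            = GWform k α * GWform k (Units.mk0 β hβ) := by
          rw [GWform_mul, GWform_mul, GWform_sq, mul_one]
        rw [hm] at hc
        rw [GWform_one] at hIH ⊢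
        rw [zsmul_eq_mul, zsmul_eq_mul] at hIH ⊢
        push_cast at hIH ⊢
        linear_combination (-(2:GW k)^n) * hc + (1 - GWform k α) * hIH
end

section
/- Let k be a field of characteristic not 2 and α ∈ k^×. If there exist positive integers a, b with a⟨1⟩ = b⟨2,2α⟩ in GW(k), then α is a sum of squares in k. -/
private lemma sq_mem_sos {R : Type*} [CommSemiring R] (a : R) : IsSumSq (a * a) := by
  simpa using IsSumSq.sq_add a 0 IsSumSq.zero

private lemma sq_mul_sos {R : Type*} [CommSemiring R] (a : R) {y : R} (hy : IsSumSq y) :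
    IsSumSq (a * a * y) := by
  induction hy with
  | zero => simpa using IsSumSq.zero
  | sq_add b pT ih =>
      rw [mul_add]
      refine IsSumSq.add ?_ ih
      have h : a * a * (b * b) = (a * b) * (a * b) := by ring
      rw [h]; exact sq_mem_sos _

private lemma sos_mul {R : Type*} [CommSemiring R] {x y : R} (hx : IsSumSq x)
    (hy : IsSumSq y) : IsSumSq (x * y) := by
  induction hx with
  | zero => simpa using IsSumSq.zero
  | sq_add a pS ih => rw [add_mul]; exact IsSumSq.add (sq_mul_sos a hy) ih

private lemma all_sos_of_neg_one {k : Type*} [Field k] (h2 : (2 : k) ≠ 0)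
    (h1 : IsSumSq (-1 : k)) (x : k) : IsSumSq x := by
  have hx : x = ((x+1)/2) * ((x+1)/2) + (-1) * (((x-1)/2) * ((x-1)/2)) := by
    field_simp; ring
  rw [hx]
  exact IsSumSq.add (sq_mem_sos _) (sos_mul h1 (sq_mem_sos _))

/-- A "cone" adapted to `α`: closed under `+`, `*`, contains all squares and `-α`,
does not contain `-1`. -/
private def IsCone {k : Type} [Field k] (α : kˣ) (P : Set k) : Prop :=
  (∀ x ∈ P, ∀ y ∈ P, x + y ∈ P) ∧ (∀ x ∈ P, ∀ y ∈ P, x * y ∈ P) ∧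
  (∀ x : k, x * x ∈ P) ∧ (-(α : k)) ∈ P ∧ (-1 : k) ∉ P

private lemma exists_total_cone {k : Type} [Field k] (h2 : (2 : k) ≠ 0) (α : kˣ)
    (hns : ¬ IsSumSq (α : k)) :
    ∃ T : Set k, IsCone α T ∧ ∀ x : k, x ∈ T ∨ -x ∈ T := by
  have h1 : ¬ IsSumSq (-1 : k) := fun h => hns (all_sos_of_neg_one h2 h _)
  have h1sos : IsSumSq (1 : k) := by simpa using sq_mem_sos (1 : k)
  set P₀ : Set k := {x : k | ∃ s t, IsSumSq s ∧ IsSumSq t ∧ x = s + (-(α : k)) * t} with hP₀def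
  have hP₀ : IsCone α P₀ := by
    refine ⟨?_, ?_, ?_, ?_, ?_⟩
    · rintro x ⟨s, t, hs, ht, rfl⟩ y ⟨s', t', hs', ht', rfl⟩
      exact ⟨s + s', t + t', hs.add hs', ht.add ht', by ring⟩
    · rintro x ⟨s, t, hs, ht, rfl⟩ y ⟨s', t', hs', ht', rfl⟩
      exact ⟨s * s' + ((α : k) * (α : k)) * (t * t'), s * t' + s' * t,
        (sos_mul hs hs').add (sq_mul_sos _ (sos_mul ht ht')),
        (sos_mul hs ht').add (sos_mul hs' ht), by ring⟩
    · intro x; exact ⟨x * x, 0, sq_mem_sos x, IsSumSq.zero, by ring⟩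
    · exact ⟨0, 1, IsSumSq.zero, h1sos, by ring⟩
    · rintro ⟨s, t, hs, ht, he⟩
      by_cases htz : t = 0
      · exact h1 (by rw [he, htz]; simpa using hs)
      · apply hns
        have hα : (α : k) = (1 + s) * t * (t⁻¹ * t⁻¹) := by
          field_simp
          linear_combination he
        rw [hα]
        exact sos_mul (sos_mul (h1sos.add hs) ht) (sq_mem_sos _)
  have hchains : ∀ c ⊆ {P : Set k | IsCone α P}, IsChain (· ⊆ ·) c → c.Nonempty →
      ∃ ub ∈ {P : Set k | IsCone α P}, ∀ s ∈ c, s ⊆ ub := by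
    intro c hc hchain hne
    obtain ⟨P₁, hP₁⟩ := hne
    refine ⟨⋃₀ c, ⟨?_, ?_, ?_, ?_, ?_⟩, fun s hs => Set.subset_sUnion_of_mem hs⟩
    · rintro x ⟨P, hP, hxP⟩ y ⟨Q, hQ, hyQ⟩
      rcases hchain.total hP hQ with h | h
      · exact ⟨Q, hQ, (hc hQ).1 x (h hxP) y hyQ⟩
      · exact ⟨P, hP, (hc hP).1 x hxP y (h hyQ)⟩
    · rintro x ⟨P, hP, hxP⟩ y ⟨Q, hQ, hyQ⟩
      rcases hchain.total hP hQ with h | h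
      · exact ⟨Q, hQ, (hc hQ).2.1 x (h hxP) y hyQ⟩
      · exact ⟨P, hP, (hc hP).2.1 x hxP y (h hyQ)⟩
    · intro x; exact ⟨P₁, hP₁, (hc hP₁).2.2.1 x⟩
    · exact ⟨P₁, hP₁, (hc hP₁).2.2.2.1⟩
    · rintro ⟨P, hP, hx⟩; exact (hc hP).2.2.2.2 hx
  obtain ⟨T, hTsub, hTmax⟩ := zorn_subset_nonempty {P : Set k | IsCone α P} hchains P₀ hP₀
  have hT : IsCone α T := hTmax.prop
  obtain ⟨hadd, hmul, hsq, hnα, hn1⟩ := hT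
  have h0T : (0 : k) ∈ T := by simpa using hsq 0
  have h1T : (1 : k) ∈ T := by simpa using hsq 1
  refine ⟨T, ⟨hadd, hmul, hsq, hnα, hn1⟩, ?_⟩
  intro x
  by_contra hcon
  push_neg at hcon
  obtain ⟨hx, hnx⟩ := hcon
  set T' : Set k := {z : k | ∃ p ∈ T, ∃ q ∈ T, z = p + (-x) * q} with hT'def
  have hTT' : T ⊆ T' := fun p hp => ⟨p, hp, 0, h0T, by ring⟩
  have hT' : IsCone α T' := by
    refine ⟨?_, ?_, ?_, hTT' hnα, ?_⟩
    · rintro u ⟨p, hp, q, hq, rfl⟩ v ⟨p', hp', q', hq', rfl⟩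
      exact ⟨p + p', hadd _ hp _ hp', q + q', hadd _ hq _ hq', by ring⟩
    · rintro u ⟨p, hp, q, hq, rfl⟩ v ⟨p', hp', q', hq', rfl⟩
      exact ⟨p * p' + (x * x) * (q * q'),
        hadd _ (hmul _ hp _ hp') _ (hmul _ (hsq x) _ (hmul _ hq _ hq')),
        p * q' + p' * q, hadd _ (hmul _ hp _ hq') _ (hmul _ hp' _ hq), by ring⟩
    · intro y; exact hTT' (hsq y)
    · rintro ⟨p, hp, q, hq, he⟩
      by_cases hqz : q = 0
      · exact hn1 (by rw [he, hqz]; simpa using hp)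
      · apply hx
        have hxe : x = (1 + p) * q * (q⁻¹ * q⁻¹) := by
          field_simp
          linear_combination he
        rw [hxe]
        exact hmul _ (hmul _ (hadd _ h1T _ hp) _ hq) _ (hsq _)
  have hEq : T = T' := hTmax.eq_of_subset hT' hTT'
  exact hnx (hEq ▸ (⟨0, h0T, 1, h1T, by ring⟩ : (-x) ∈ T'))




private lemma stmt4_main (k : Type) [Field k] (h2 : (2 : k) ≠ 0) (α : kˣ) (a b : ℕ)
    (ha : 0 < a)
    (hab : (a : ℤ) • GWform k 1 =
      (b : ℤ) •
        (GWform k (Units.mk0 (2 : k) h2) + GWform k (Units.mk0 (2 : k) h2 * α))) :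
    IsSumSq (α : k) := by
  classical
  by_contra hns
  obtain ⟨T, ⟨hadd, hmul, hsq, hnα, hn1⟩, htot⟩ := exists_total_cone h2 α hns
  have h0T : (0 : k) ∈ T := by simpa using hsq 0
  have h1T : (1 : k) ∈ T := by simpa using hsq 1
  have hanti : ∀ x : k, x ∈ T → -x ∈ T → x ≠ 0 → False := by
    intro x hx hmx hxne
    apply hn1
    have he : (-1 : k) = x * (-x) * (x⁻¹ * x⁻¹) := by field_simp
    rw [he]
    exact hmul _ (hmul _ hx _ hmx) _ (hsq _)
  set s : kˣ → ℤ := fun u => if (u : k) ∈ T then 1 else -1 with hsdef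
  have s_one : s 1 = 1 := by simp [hsdef, h1T]
  have s_mul : ∀ u v : kˣ, s (u * v) = s u * s v := by
    intro u v
    by_cases hu : (u : k) ∈ T <;> by_cases hv : (v : k) ∈ T
    · have hm : (u : k) * (v : k) ∈ T := hmul _ hu _ hv
      simp [hsdef, hu, hv, hm, Units.val_mul]
    · have hv' : -(v : k) ∈ T := (htot _).resolve_left hv
      have hm : -((u : k) * (v : k)) ∈ T := by
        have := hmul _ hu _ hv'; rwa [mul_neg] at this
      have hnot : (u : k) * (v : k) ∉ T :=
        fun h => hanti _ h hm (mul_ne_zero u.ne_zero v.ne_zero)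
      simp [hsdef, hu, hv, hnot, Units.val_mul]
    · have hu' : -(u : k) ∈ T := (htot _).resolve_left hu
      have hm : -((u : k) * (v : k)) ∈ T := by
        have := hmul _ hu' _ hv; rwa [neg_mul] at this
      have hnot : (u : k) * (v : k) ∉ T :=
        fun h => hanti _ h hm (mul_ne_zero u.ne_zero v.ne_zero)
      simp [hsdef, hu, hv, hnot, Units.val_mul]
    · have hu' : -(u : k) ∈ T := (htot _).resolve_left hu
      have hv' : -(v : k) ∈ T := (htot _).resolve_left hv
      have hm : (u : k) * (v : k) ∈ T := by
        have := hmul _ hu' _ hv'; rwa [neg_mul_neg] at this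
      simp [hsdef, hu, hv, hm, Units.val_mul]
  set sgn : kˣ →* ℤ := ⟨⟨s, s_one⟩, s_mul⟩ with hsgndef
  set φ : MonoidAlgebra ℤ kˣ →ₐ[ℤ] ℤ := MonoidAlgebra.lift ℤ ℤ kˣ sgn with hφdef
  have hφof : ∀ u : kˣ, φ (MonoidAlgebra.of ℤ kˣ u) = s u := by
    intro u; simp [hφdef, MonoidAlgebra.lift_of, hsgndef]
  have s_sq : ∀ u : kˣ, s u * s u = 1 := by
    intro u; by_cases hu : (u : k) ∈ T <;> simp [hsdef, hu]
  have hle0 : ∀ x ∈ GWIdeal k, φ x = 0 := by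
    have hker : GWIdeal k ≤ RingHom.ker φ.toRingHom := by
      rw [GWIdeal, Ideal.span_le]
      rintro x (⟨u, rfl⟩ | ⟨A, B, C, hABC, rfl⟩)
      · show _ ∈ RingHom.ker φ.toRingHom
        rw [RingHom.mem_ker]
        show φ _ = 0
        rw [map_sub, map_one, hφof, s_mul, s_sq, sub_self]
      · show _ ∈ RingHom.ker φ.toRingHom
        rw [RingHom.mem_ker]
        show φ _ = 0
        rw [map_sub, map_sub, map_add, hφof, hφof, hφof, hφof, s_mul, s_mul]
        by_cases hA : (A : k) ∈ T <;> by_cases hB : (B : k) ∈ T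
        · have hC : (C : k) ∈ T := by rw [← hABC]; exact hadd _ hA _ hB
          simp [hsdef, hA, hB, hC]
        · by_cases hC : (C : k) ∈ T <;> simp [hsdef, hA, hB, hC]
        · by_cases hC : (C : k) ∈ T <;> simp [hsdef, hA, hB, hC]
        · have hnC : (C : k) ∉ T := by
            intro hC
            have hA' : -(A : k) ∈ T := (htot _).resolve_left hA
            have hB' : -(B : k) ∈ T := (htot _).resolve_left hB
            have hm : -(C : k) ∈ T := by
              have := hadd _ hA' _ hB'
              rw [← neg_add, hABC] at this
              exact this
            exact hanti _ hC hm C.ne_zero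
          simp [hsdef, hA, hB, hnC]
    exact fun x hx => hker hx
  set ψ : GW k →+* ℤ := Ideal.Quotient.lift (GWIdeal k) φ.toRingHom hle0 with hψdef
  have hψ : ∀ u : kˣ, ψ (GWform k u) = s u := by
    intro u
    show Ideal.Quotient.lift (GWIdeal k) φ.toRingHom hle0
      (Ideal.Quotient.mk (GWIdeal k) (MonoidAlgebra.of ℤ kˣ u)) = s u
    rw [Ideal.Quotient.lift_mk]
    exact hφof u
  have key := congrArg ψ hab
  rw [map_zsmul, map_zsmul, map_add, hψ, hψ, hψ] at key
  have h2T : (2 : k) ∈ T := by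
    have := hadd _ h1T _ h1T
    rwa [one_add_one_eq_two] at this
  have s2 : s (Units.mk0 (2 : k) h2) = 1 := by simp [hsdef, h2T]
  have s2α : s (Units.mk0 (2 : k) h2 * α) = -1 := by
    have hm : -((2 : k) * (α : k)) ∈ T := by
      have := hmul _ h2T _ hnα; rwa [mul_neg] at this
    have hnot : (2 : k) * (α : k) ∉ T :=
      fun h => hanti _ h hm (mul_ne_zero h2 α.ne_zero)
    simp [hsdef, hnot, Units.val_mul]
  rw [s_one, s2, s2α] at key
  simp [smul_eq_mul] at key
  omega


/-- If `a⟨1⟩ = b⟨2, 2α⟩` in `GW(k)` for some positive integers `a, b`, then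
`α` is a sum of squares in `k` (char `k` ≠ 2). -/
theorem stmt4 (k : Type) [Field k] (h2 : (2 : k) ≠ 0) (α : kˣ) (a b : ℕ)
    (ha : 0 < a) (hb : 0 < b)
    (hab : (a : ℤ) • GWform k 1 =
      (b : ℤ) •
        (GWform k (Units.mk0 (2 : k) h2) + GWform k (Units.mk0 (2 : k) h2 * α))) :
    IsSumSq (α : k) := by
  exact stmt4_main k h2 α a b ha hab
end

section
/- Let k be a field of characteristic not 2 and α ∈ k^×. Then α is a sum of squares in k^× if and only if there exist positive integers a, b with a⟨1⟩ = b⟨2,2α⟩ in GW(k). -/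
section GWLemmas
variable {k : Type} [Field k]

lemma gwform_mul (a b : kˣ) : GWform k a * GWform k b = GWform k (a * b) := by
  unfold GWform
  rw [map_mul, map_mul]
  rfl

lemma gwform_one : GWform k 1 = 1 := by
  unfold GWform; rw [map_one, map_one]
  rfl

lemma gwform_sq (a : kˣ) : GWform k (a * a) = 1 := by
  have hmem : MonoidAlgebra.of ℤ kˣ (a * a) - 1 ∈ GWIdeal k :=
    Ideal.subset_span (Or.inl ⟨a, rfl⟩)
  have h := Ideal.Quotient.eq.mpr hmem
  rw [GWform, h, map_one]
  rfl

lemma gwform_chain (a b c : kˣ) (h : (a : k) + (b : k) = (c : k)) :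
    GWform k a + GWform k b = GWform k c + GWform k (c * a * b) := by
  have hmem : (MonoidAlgebra.of ℤ kˣ a + MonoidAlgebra.of ℤ kˣ b
      - MonoidAlgebra.of ℤ kˣ c - MonoidAlgebra.of ℤ kˣ (c * a * b)) ∈ GWIdeal k :=
    Ideal.subset_span (Or.inr ⟨a, b, c, h, rfl⟩)
  have h2 : (MonoidAlgebra.of ℤ kˣ a + MonoidAlgebra.of ℤ kˣ b)
      - (MonoidAlgebra.of ℤ kˣ c + MonoidAlgebra.of ℤ kˣ (c * a * b)) ∈ GWIdeal k := by
    convert hmem using 1; ring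
  have h3 := Ideal.Quotient.eq.mpr h2
  exact h3

end GWLemmas


lemma sq_isSumSq' {R : Type*} [CommRing R] (x : R) : IsSumSq (x * x) := by
  simpa using IsSumSq.sq_add x 0 IsSumSq.zero

lemma isSumSq_sq_mul' {R : Type*} [CommRing R] (x : R) {t : R} (ht : IsSumSq t) :
    IsSumSq (x * x * t) := by
  induction ht with
  | zero => simpa using IsSumSq.zero
  | @sq_add y t' ht' ih =>
      have h : x * x * (y * y + t') = (x * y) * (x * y) + x * x * t' := by ring
      rw [h]; exact IsSumSq.sq_add _ ih

lemma isSumSq_mul' {R : Type*} [CommRing R] {s t : R} (hs : IsSumSq s) (ht : IsSumSq t) :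
    IsSumSq (s * t) := by
  induction hs with
  | zero => simpa using IsSumSq.zero
  | @sq_add x s' hs' ih =>
      have h : (x * x + s') * t = x * x * t + s' * t := by ring
      rw [h]; exact (isSumSq_sq_mul' x ht).add ih

lemma isSumSq_two' {k : Type} [Field k] : IsSumSq (2 : k) := by
  have h : (2 : k) = 1 * 1 + (1 * 1 + 0) := by norm_num
  rw [h]; exact IsSumSq.sq_add _ (IsSumSq.sq_add _ IsSumSq.zero)

lemma isSumSq_of_neg_one {k : Type} [Field k] (h2 : (2 : k) ≠ 0) (hneg : IsSumSq (-1 : k))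
    (x : k) : IsSumSq x := by
  have hx : x = ((x+1)/2) * ((x+1)/2) + (-1) * (((x-1)/2) * ((x-1)/2)) := by
    field_simp; ring
  rw [hx]
  exact IsSumSq.sq_add _ (isSumSq_mul' hneg (sq_isSumSq' _))

lemma gw_key {k : Type} [Field k] {s : k} (hs : IsSumSq s) :
    ∀ u : kˣ, (u : k) = s → ∃ N : ℕ, 0 < N ∧ (N : GW k) * GWform k u = (N : GW k) := by
  induction hs with
  | zero => intro u hu; exact absurd hu u.ne_zero
  | @sq_add x t ht ih =>
    intro u hu
    by_cases hx : x = 0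
    · exact ih u (by simpa [hx] using hu)
    · by_cases ht0 : t = 0
      · refine ⟨1, one_pos, ?_⟩
        have hu' : u = Units.mk0 x hx * Units.mk0 x hx := by
          apply Units.ext; simp [hu, ht0]
        rw [hu', gwform_sq]; simp
      · obtain ⟨N, hN, hNt⟩ := ih (Units.mk0 t ht0) rfl
        refine ⟨2 * N, by positivity, ?_⟩
        have hchain := gwform_chain (Units.mk0 x hx * Units.mk0 x hx) (Units.mk0 t ht0) u
          (by simp [hu])
        have h1 : GWform k (Units.mk0 x hx * Units.mk0 x hx) = 1 := gwform_sq _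
        have hm : GWform k (u * (Units.mk0 x hx * Units.mk0 x hx) * Units.mk0 t ht0)
            = GWform k u * GWform k (Units.mk0 t ht0) := by
          rw [← gwform_mul, ← gwform_mul, gwform_sq, mul_one]
        rw [h1, hm] at hchain
        push_cast
        linear_combination (-(N : GW k)) * hchain + (1 - GWform k u) * hNt

lemma gw_forward {k : Type} [Field k] (h2 : (2 : k) ≠ 0) (α : kˣ) (hsum : IsSumSq (α : k)) :
    ∃ a b : ℕ, 0 < a ∧ 0 < b ∧
      (a : ℤ) • GWform k 1 =
        (b : ℤ) • (GWform k (Units.mk0 (2 : k) h2) + GWform k (Units.mk0 (2 : k) h2 * α)) := by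
  obtain ⟨Na, hNa, hha⟩ := gw_key hsum α rfl
  obtain ⟨N2, hN2, hh2⟩ := gw_key (isSumSq_two' (k := k)) (Units.mk0 (2 : k) h2) rfl
  refine ⟨2 * (Na * N2), Na * N2, by positivity, by positivity, ?_⟩
  rw [gwform_one, ← gwform_mul]
  simp only [zsmul_eq_mul]
  push_cast
  linear_combination (-(Na : GW k) * (1 + GWform k α)) * hh2 + (-(N2 : GW k)) * hha

lemma exists_max_preordering {k : Type} [Field k] (h2 : (2 : k) ≠ 0) (α : kˣ)
    (hα : ¬ IsSumSq (α : k)) :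
    ∃ M : Set k,
      (∀ x ∈ M, ∀ y ∈ M, x + y ∈ M) ∧
      (∀ x ∈ M, ∀ y ∈ M, x * y ∈ M) ∧
      (∀ x : k, x * x ∈ M) ∧
      (-1 : k) ∉ M ∧
      (-(α : k)) ∈ M ∧
      (∀ x : k, x ≠ 0 → x ∉ M → -x ∈ M) := by
  classical
  set S : Set (Set k) := {P | (∀ x ∈ P, ∀ y ∈ P, x + y ∈ P) ∧
      (∀ x ∈ P, ∀ y ∈ P, x * y ∈ P) ∧ (∀ x : k, x * x ∈ P) ∧ (-1 : k) ∉ P} with hS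
  set P₀ : Set k := {z | ∃ s t : k, IsSumSq s ∧ IsSumSq t ∧ z = s - (α : k) * t} with hP₀def
  have hkey : ∀ s t : k, IsSumSq s → IsSumSq t → (-1 : k) = s - (α : k) * t → False := by
    intro s t hs ht hst
    by_cases ht0 : t = 0
    · rw [ht0, mul_zero, sub_zero] at hst
      rw [← hst] at hs
      exact hα (isSumSq_of_neg_one h2 hs _)
    · apply hα
      have hval : (α : k) = (1 + s) * t * (t⁻¹ * t⁻¹) := by
        field_simp
        linear_combination hst
      rw [hval]
      exact isSumSq_mul' (isSumSq_mul' (by simpa using IsSumSq.sq_add 1 hs) ht)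
        (sq_isSumSq' _)
  have hP₀ : P₀ ∈ S := by
    refine ⟨?_, ?_, ?_, ?_⟩
    · rintro x ⟨s, t, hs, ht, rfl⟩ y ⟨s', t', hs', ht', rfl⟩
      exact ⟨s + s', t + t', hs.add hs', ht.add ht', by ring⟩
    · rintro x ⟨s, t, hs, ht, rfl⟩ y ⟨s', t', hs', ht', rfl⟩
      exact ⟨s * s' + ((α : k) * (α : k)) * (t * t'), s * t' + s' * t,
        (isSumSq_mul' hs hs').add (isSumSq_sq_mul' _ (isSumSq_mul' ht ht')),
        (isSumSq_mul' hs ht').add (isSumSq_mul' hs' ht), by ring⟩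
    · intro x
      exact ⟨x * x, 0, sq_isSumSq' x, IsSumSq.zero, by ring⟩
    · rintro ⟨s, t, hs, ht, h⟩
      exact hkey s t hs ht h
  have hZ : ∀ c ⊆ S, IsChain (· ⊆ ·) c → c.Nonempty →
      ∃ ub ∈ S, ∀ s ∈ c, s ⊆ ub := by
    intro c hcS hc hcne
    refine ⟨⋃₀ c, ⟨?_, ?_, ?_, ?_⟩, fun s hs => Set.subset_sUnion_of_mem hs⟩
    · rintro x ⟨P, hP, hx⟩ y ⟨Q, hQ, hy⟩
      rcases hc.total hP hQ with h | h
      · exact ⟨Q, hQ, (hcS hQ).1 x (h hx) y hy⟩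
      · exact ⟨P, hP, (hcS hP).1 x hx y (h hy)⟩
    · rintro x ⟨P, hP, hx⟩ y ⟨Q, hQ, hy⟩
      rcases hc.total hP hQ with h | h
      · exact ⟨Q, hQ, (hcS hQ).2.1 x (h hx) y hy⟩
      · exact ⟨P, hP, (hcS hP).2.1 x hx y (h hy)⟩
    · intro x
      obtain ⟨P, hP⟩ := hcne
      exact ⟨P, hP, (hcS hP).2.2.1 x⟩
    · rintro ⟨P, hP, h⟩
      exact (hcS hP).2.2.2 h
  obtain ⟨M, hM0, hMmax⟩ := zorn_subset_nonempty S hZ P₀ hP₀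
  obtain ⟨hadd, hmul, hsq, hneg1⟩ := hMmax.prop
  have h0M : (0 : k) ∈ M := by simpa using hsq 0
  have h1M : (1 : k) ∈ M := by simpa using hsq 1
  have hstep : ∀ x : k, x ≠ 0 → x ∉ M → -x ∈ M := by
    intro x hx0 hxM
    set M' : Set k := {z | ∃ p ∈ M, ∃ q ∈ M, z = p - x * q} with hM'
    have hMM' : M ⊆ M' := fun p hp => ⟨p, hp, 0, h0M, by ring⟩
    have hM'S : M' ∈ S := by
      refine ⟨?_, ?_, ?_, ?_⟩
      · rintro _ ⟨p, hp, q, hq, rfl⟩ _ ⟨p', hp', q', hq', rfl⟩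
        exact ⟨p + p', hadd p hp p' hp', q + q', hadd q hq q' hq', by ring⟩
      · rintro _ ⟨p, hp, q, hq, rfl⟩ _ ⟨p', hp', q', hq', rfl⟩
        exact ⟨p * p' + (x * x) * (q * q'),
          hadd _ (hmul p hp p' hp') _ (hmul _ (hsq x) _ (hmul q hq q' hq')),
          p * q' + p' * q, hadd _ (hmul p hp q' hq') _ (hmul p' hp' q hq), by ring⟩
      · intro y; exact hMM' (hsq y)
      · rintro ⟨p, hp, q, hq, h⟩
        by_cases hq0 : q = 0
        · rw [hq0, mul_zero, sub_zero] at h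
          rw [← h] at hp
          exact hneg1 hp
        · apply hxM
          have hval : x = (1 + p) * q * (q⁻¹ * q⁻¹) := by
            field_simp
            linear_combination h
          rw [hval]
          exact hmul _ (hmul _ (hadd 1 h1M p hp) q hq) _ (hsq q⁻¹)
    have hsub : M' ⊆ M := hMmax.2 hM'S hMM'
    exact hsub ⟨0, h0M, 1, h1M, by ring⟩
  refine ⟨M, hadd, hmul, hsq, hneg1, ?_, hstep⟩
  exact hM0 ⟨0, 1, IsSumSq.zero, by simpa using sq_isSumSq' (1 : k), by ring⟩

lemma gw_backward {k : Type} [Field k] (h2 : (2 : k) ≠ 0) (α : kˣ) (hα : ¬ IsSumSq (α : k))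
    (a b : ℕ) (ha : 0 < a)
    (heq : (a : ℤ) • GWform k 1 =
      (b : ℤ) • (GWform k (Units.mk0 (2 : k) h2) + GWform k (Units.mk0 (2 : k) h2 * α))) :
    False := by
  classical
  obtain ⟨M, hadd, hmul, hsq, hneg1, hnegα, hstep⟩ := exists_max_preordering h2 α hα
  have h1M : (1 : k) ∈ M := by simpa using hsq 1
  have hnotboth : ∀ x : k, x ≠ 0 → x ∈ M → -x ∈ M → False := by
    intro x hx0 hx hnx
    apply hneg1
    have hval : (-1 : k) = x * (-x) * (x⁻¹ * x⁻¹) := by field_simp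
    rw [hval]
    exact hmul _ (hmul _ hx _ hnx) _ (hsq x⁻¹)
  have hmulsign : ∀ u v : kˣ,
      (if ((u * v : kˣ) : k) ∈ M then (1 : ℤ) else -1) =
        (if (u : k) ∈ M then (1 : ℤ) else -1) * (if (v : k) ∈ M then (1 : ℤ) else -1) := by
    intro u v
    by_cases hu : (u : k) ∈ M <;> by_cases hv : (v : k) ∈ M
    · have huv : (u : k) * (v : k) ∈ M := hmul _ hu _ hv
      simp [hu, hv, Units.val_mul, huv]
    · have hv' : -(v : k) ∈ M := hstep _ v.ne_zero hv
      have hneg : -((u : k) * v) ∈ M := by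
        have := hmul _ hu _ hv'
        simpa [mul_neg] using this
      have huv : (u : k) * (v : k) ∉ M :=
        fun hc => hnotboth _ (mul_ne_zero u.ne_zero v.ne_zero) hc hneg
      simp [hu, hv, Units.val_mul, huv]
    · have hu' : -(u : k) ∈ M := hstep _ u.ne_zero hu
      have hneg : -((u : k) * v) ∈ M := by
        have := hmul _ hu' _ hv
        simpa [neg_mul] using this
      have huv : (u : k) * (v : k) ∉ M :=
        fun hc => hnotboth _ (mul_ne_zero u.ne_zero v.ne_zero) hc hneg
      simp [hu, hv, Units.val_mul, huv]
    · have huv : (u : k) * (v : k) ∈ M := by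
        have := hmul _ (hstep _ u.ne_zero hu) _ (hstep _ v.ne_zero hv)
        simpa [neg_mul_neg] using this
      simp [hu, hv, Units.val_mul, huv]
  set σ : kˣ →* ℤ :=
    { toFun := fun u => if (u : k) ∈ M then (1 : ℤ) else -1
      map_one' := by simp [h1M]
      map_mul' := fun u v => hmulsign u v } with hσ
  have hσval : ∀ u : kˣ, σ u = if (u : k) ∈ M then (1 : ℤ) else -1 := fun _ => rfl
  set φ : MonoidAlgebra ℤ kˣ →ₐ[ℤ] ℤ := MonoidAlgebra.lift ℤ ℤ kˣ σ with hφ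
  have hφof : ∀ u : kˣ, φ (MonoidAlgebra.of ℤ kˣ u) = σ u := fun u => MonoidAlgebra.lift_of σ u
  have hker : ∀ x ∈ GWIdeal k, φ.toRingHom x = 0 := by
    have hle : GWIdeal k ≤ RingHom.ker φ.toRingHom := by
      rw [GWIdeal, Ideal.span_le]
      rintro x (⟨u, rfl⟩ | ⟨u, v, w, huvw, rfl⟩)
      · have : φ (MonoidAlgebra.of ℤ kˣ (u * u) - 1) = σ u * σ u - 1 := by
          rw [map_sub, map_one, hφof, map_mul]
        have h0 : σ u * σ u - 1 = 0 := by
          rw [hσval]; by_cases h : (u : k) ∈ M <;> simp [h]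
        simp only [SetLike.mem_coe, RingHom.mem_ker, AlgHom.toRingHom_eq_coe,
          RingHom.coe_coe]
        rw [this, h0]
      · have hφx : φ (MonoidAlgebra.of ℤ kˣ u + MonoidAlgebra.of ℤ kˣ v
            - MonoidAlgebra.of ℤ kˣ w - MonoidAlgebra.of ℤ kˣ (w * u * v))
            = σ u + σ v - σ w - σ w * σ u * σ v := by
          rw [map_sub, map_sub, map_add, hφof, hφof, hφof, hφof, map_mul, map_mul]
        have h0 : σ u + σ v - σ w - σ w * σ u * σ v = 0 := by
          by_cases hu : (u : k) ∈ M <;> by_cases hv : (v : k) ∈ M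
          · have hw : (w : k) ∈ M := by rw [← huvw]; exact hadd _ hu _ hv
            rw [hσval, hσval, hσval]; simp [hu, hv, hw]
          · by_cases hw : (w : k) ∈ M <;>
              (rw [hσval, hσval, hσval]; simp [hu, hv, hw])
          · by_cases hw : (w : k) ∈ M <;>
              (rw [hσval, hσval, hσval]; simp [hu, hv, hw])
          · have hw : (w : k) ∉ M := by
              intro hw
              have hnw : -((w : k)) ∈ M := by
                have h' := hadd _ (hstep _ u.ne_zero hu) _ (hstep _ v.ne_zero hv)
                have he : -(u : k) + -(v : k) = -(w : k) := by rw [← huvw]; ring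
                rwa [he] at h' 
              exact hnotboth _ w.ne_zero hw hnw
            rw [hσval, hσval, hσval]; simp [hu, hv, hw]
        simp only [SetLike.mem_coe, RingHom.mem_ker, AlgHom.toRingHom_eq_coe,
          RingHom.coe_coe]
        rw [hφx, h0]
    intro x hx
    exact RingHom.mem_ker.mp (hle hx)
  set ψ : GW k →+* ℤ := Ideal.Quotient.lift (GWIdeal k) φ.toRingHom hker with hψ
  have hψform : ∀ u : kˣ, ψ (GWform k u) = σ u := fun u => hφof u
  have happ := congrArg ψ heq
  rw [map_zsmul, map_zsmul, map_add, hψform, hψform, hψform, map_one] at happ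
  -- σ (mk0 2) = 1
  have h2M : (2 : k) ∈ M := by
    have h' := hadd _ h1M _ h1M
    norm_num at h'
    convert h' using 1
  have hσ2 : σ (Units.mk0 (2 : k) h2) = 1 := by
    rw [hσval]; simp [h2M]
  have hαnot : (α : k) ∉ M := fun hc => hnotboth _ α.ne_zero hc hnegα
  have hσ2α : σ (Units.mk0 (2 : k) h2 * α) = -1 := by
    rw [map_mul, hσ2, one_mul, hσval]; simp [hαnot]
  rw [hσ2, hσ2α] at happ
  simp only [smul_eq_mul, mul_one] at happ
  omega

/-- `α ∈ kˣ` is a sum of squares in `k` (char `k` ≠ 2) if and only if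
`a⟨1⟩ = b⟨2, 2α⟩` in `GW(k)` for some positive integers `a, b`. -/
theorem stmt5 (k : Type) [Field k] (h2 : (2 : k) ≠ 0) (α : kˣ) :
    IsSumSq (α : k) ↔
      ∃ a b : ℕ, 0 < a ∧ 0 < b ∧
        (a : ℤ) • GWform k 1 =
          (b : ℤ) •
            (GWform k (Units.mk0 (2 : k) h2) + GWform k (Units.mk0 (2 : k) h2 * α)) := by
  constructor
  · intro hsum
    exact gw_forward h2 α hsum
  · rintro ⟨a, b, ha, hb, heq⟩
    by_contra hna
    exact gw_backward h2 α hna a b ha heq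
end

section
/- Let L/k be a finite Galois extension of fields with Gal(L/k) ≅ ℤ/4ℤ. Then the unique intermediate quadratic subextension E of L/k has the form E = k(√α) where α = a² + b² for some a, b ∈ k^×. -/
set_option synthInstance.maxHeartbeats 1000000
set_option maxHeartbeats 1000000

/-- If `L/k` is a finite Galois extension (char `k` ≠ 2) with Galois group cyclic of
order 4, then there is an intermediate field `E = k(√α)` of degree 2 over `k`
where `α = a² + b²` for some `a, b ∈ kˣ`. -/
theorem stmt8 (k L : Type) [Field k] [Field L] [Algebra k L]
    [FiniteDimensional k L] [IsGalois k L] (h2 : (2 : k) ≠ 0)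
    (hcyc : Nonempty ((L ≃ₐ[k] L) ≃* Multiplicative (ZMod 4))) :
    ∃ (α a b : k), a ≠ 0 ∧ b ≠ 0 ∧ α = a ^ 2 + b ^ 2 ∧
      ∃ E : IntermediateField k L, Module.finrank k E = 2 ∧
        ∃ s : E, s ^ 2 = algebraMap k E α ∧ Algebra.adjoin k {s} = ⊤ := by
  classical
  open Module IntermediateField Polynomial in
  obtain ⟨e⟩ := hcyc
  set σ : L ≃ₐ[k] L := e.symm (Multiplicative.ofAdd 1) with hσdef
  have heσ : e σ = Multiplicative.ofAdd (1 : ZMod 4) := e.apply_symm_apply _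
  have hσ4 : σ ^ 4 = 1 := by
    apply e.injective
    rw [map_pow, heσ, e.map_one]
    decide
  have hσ2 : σ ^ 2 ≠ 1 := by
    intro h
    have := congrArg e h
    rw [map_pow, heσ, e.map_one] at this
    exact absurd this (by decide)
  have hgen : ∀ g : L ≃ₐ[k] L, ∃ n : ℕ, g = σ ^ n := by
    intro g
    refine ⟨(Multiplicative.toAdd (e g)).val, ?_⟩
    apply e.injective
    rw [map_pow, heσ]
    have h : ∀ m : Multiplicative (ZMod 4),
        m = Multiplicative.ofAdd (1 : ZMod 4) ^ (Multiplicative.toAdd m).val := by decide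
    exact h (e g)
  -- any element fixed by σ lies in the base field
  have hfix : ∀ x : L, σ x = x → ∃ c : k, algebraMap k L c = x := by
    intro x hx
    have hall : ∀ g : L ≃ₐ[k] L, g x = x := by
      intro g
      obtain ⟨n, rfl⟩ := hgen g
      induction n with
      | zero => simp
      | succ n ih => rw [pow_succ, AlgEquiv.mul_apply, hx, ih]
    have hb : x ∈ (⊥ : IntermediateField k L) := by
      rw [← IsGalois.fixedField_fixingSubgroup (⊥ : IntermediateField k L)]
      intro g
      exact hall g
    obtain ⟨c, hc⟩ := IntermediateField.mem_bot.mp hb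
    exact ⟨c, hc⟩
  have two_ne : (2 : L) ≠ 0 := by
    intro h
    apply h2
    have h4 : algebraMap k L 2 = 0 := by rw [map_ofNat]; exact h
    exact (_root_.map_eq_zero _).mp h4
  -- the quadratic intermediate field
  set H : Subgroup (L ≃ₐ[k] L) := Subgroup.zpowers (σ ^ 2) with hHdef
  set E : IntermediateField k L := IntermediateField.fixedField H with hEdef
  have hord : orderOf (σ ^ 2) = 2 := by
    apply orderOf_eq_prime
    · rw [← pow_mul]; exact hσ4
    · exact hσ2
  have hcardH : Fintype.card H = 2 := by
    rw [Fintype.card_zpowers, hord]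
  have hfr4 : Module.finrank k L = 4 := by
    rw [← IsGalois.card_aut_eq_finrank, Nat.card_congr e.toEquiv]
    simp
  have hfrEL : Module.finrank E L = 2 := by
    rw [hEdef, IntermediateField.finrank_fixedField_eq_card, Nat.card_eq_fintype_card, hcardH]
  have hfrkE : Module.finrank k E = 2 := by
    have h := Module.finrank_mul_finrank k E L
    rw [hfrEL, hfr4] at h
    omega
  -- an element of E not in the base field
  have hnotle : ¬ (E ≤ (⊥ : IntermediateField k L)) := by
    intro hle
    have hEb : E = ⊥ := le_bot_iff.mp hle
    rw [hEb, IntermediateField.finrank_bot] at hfrkE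
    exact absurd hfrkE (by norm_num)
  obtain ⟨t, htE, htb⟩ := SetLike.not_le_iff_exists.mp hnotle
  have ht2 : (σ ^ 2) t = t := htE ⟨σ ^ 2, Subgroup.mem_zpowers _⟩
  have htne : σ t ≠ t := by
    intro h
    obtain ⟨c, hc⟩ := hfix t h
    exact htb (IntermediateField.mem_bot.mpr ⟨c, hc⟩)
  -- the square root generator s₀
  obtain ⟨s₀, hs₀def⟩ : ∃ v : L, v = t - σ t := ⟨_, rfl⟩
  have hs₀ne : s₀ ≠ 0 := hs₀def ▸ sub_ne_zero.mpr (Ne.symm htne)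
  have hσs₀ : σ s₀ = -s₀ := by
    rw [hs₀def, map_sub]
    have h : σ (σ t) = (σ ^ 2) t := by rw [pow_two, AlgEquiv.mul_apply]
    rw [h, ht2]; ring
  have hσ2s₀ : (σ ^ 2) s₀ = s₀ := by
    rw [pow_two, AlgEquiv.mul_apply, hσs₀, map_neg, hσs₀, neg_neg]
  have hs₀E : s₀ ∈ E := by
    rw [hEdef]
    rintro ⟨g, m, rfl⟩
    show ((σ ^ 2) ^ m) s₀ = s₀
    induction m using Int.induction_on with
    | zero => simp
    | succ i ih => rw [zpow_add_one, AlgEquiv.mul_apply, hσ2s₀, ih]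
    | pred i ih =>
      rw [zpow_sub_one, AlgEquiv.mul_apply]
      have h : (σ ^ 2)⁻¹ s₀ = s₀ := by
        conv_lhs => rw [← hσ2s₀]
        exact (σ ^ 2).symm_apply_apply s₀
      rw [h, ih]
  -- D, a nonsquare of k whose square root is s₀
  have hfixsq : σ (s₀ ^ 2) = s₀ ^ 2 := by rw [map_pow, hσs₀]; ring
  obtain ⟨D, hD⟩ := hfix (s₀ ^ 2) hfixsq
  have hDnonsq : ∀ c : k, c ^ 2 ≠ D := by
    intro c hc
    have hcL : (algebraMap k L c) ^ 2 = s₀ ^ 2 := by rw [← map_pow, hc, hD]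
    have hz : (s₀ - algebraMap k L c) * (s₀ + algebraMap k L c) = 0 := by
      linear_combination -hcL
    rcases mul_eq_zero.mp hz with h | h
    · have hs : s₀ = algebraMap k L c := sub_eq_zero.mp h
      have h1 : σ s₀ = s₀ := by rw [hs, AlgEquiv.commutes]
      rw [hσs₀] at h1
      have h0 : (2 : L) * s₀ = 0 := by linear_combination -h1
      exact hs₀ne ((mul_eq_zero.mp h0).resolve_left two_ne)
    · have hs : s₀ = -algebraMap k L c := by linear_combination h
      have h1 : σ s₀ = s₀ := by rw [hs, map_neg, AlgEquiv.commutes]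
      rw [hσs₀] at h1
      have h0 : (2 : L) * s₀ = 0 := by linear_combination -h1
      exact hs₀ne ((mul_eq_zero.mp h0).resolve_left two_ne)
  -- s generates E and s² = D
  set s : E := ⟨s₀, hs₀E⟩ with hsdef
  have hs2 : s ^ 2 = algebraMap k E D := by
    apply Subtype.ext
    show s₀ ^ 2 = _
    rw [← hD]
    rfl
  have hs₀nr : s₀ ∉ (algebraMap k L).range := by
    rintro ⟨c, hc⟩
    have h1 : σ s₀ = s₀ := by rw [← hc, AlgEquiv.commutes]
    rw [hσs₀] at h1
    have h0 : (2 : L) * s₀ = 0 := by linear_combination -h1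
    exact hs₀ne ((mul_eq_zero.mp h0).resolve_left two_ne)
  have hint : IsIntegral k s₀ := IsIntegral.of_finite k s₀
  have hmin : (minpoly k s₀).natDegree = 2 := by
    have hle : (minpoly k s₀).natDegree ≤ 2 := by
      have hne : (X ^ 2 - C D : k[X]) ≠ 0 := by
        intro h
        have h' := congrArg natDegree h
        rw [natDegree_X_pow_sub_C] at h'
        simp at h'
      have hev : aeval s₀ (X ^ 2 - C D : k[X]) = 0 := by
        rw [map_sub, map_pow, aeval_X, aeval_C, ← hD]; ring
      have hdeg := minpoly.degree_le_of_ne_zero k s₀ hne hev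
      have h2' := natDegree_le_natDegree hdeg
      rwa [natDegree_X_pow_sub_C] at h2'
    have hge : 2 ≤ (minpoly k s₀).natDegree := (minpoly.two_le_natDegree_iff hint).mpr hs₀nr
    omega
  have hsint : IsIntegral k s := IsIntegral.of_finite k s
  have hvalinj : Function.Injective (E.val : E →ₐ[k] L) := fun a b h => Subtype.ext h
  have hmins : (minpoly k s).natDegree = 2 := by
    have heq := minpoly.algHom_eq E.val hvalinj s
    rw [← heq]
    exact hmin
  have hadj : Algebra.adjoin k {s} = (⊤ : Subalgebra k E) := by
    have hts : (IntermediateField.adjoin k ({s} : Set E)).toSubalgebra = Algebra.adjoin k {s} :=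
      IntermediateField.adjoin_simple_toSubalgebra_of_isAlgebraic hsint.isAlgebraic
    have hfr : Module.finrank k (Algebra.adjoin k {s}) = 2 := by
      rw [← hts, IntermediateField.finrank_eq_finrank_subalgebra,
        IntermediateField.adjoin.finrank hsint, hmins]
    exact Algebra.toSubmodule_eq_top.1 (Submodule.eq_top_of_finrank_eq <|
      (Algebra.adjoin k {s}).finrank_toSubmodule.trans (hfr.trans hfrkE.symm))
  -- now show D is a sum of two nonzero squares
  suffices hsum : ∃ a b : k, a ≠ 0 ∧ b ≠ 0 ∧ D = a ^ 2 + b ^ 2 by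
    obtain ⟨a, b, ha, hb, hab⟩ := hsum
    exact ⟨D, a, b, ha, hb, hab, E, hfrkE, s, hs2, hadj⟩
  obtain ⟨u, hu⟩ : ∃ u : L, (σ ^ 2) u ≠ u := by
    by_contra h
    push_neg at h
    exact hσ2 (AlgEquiv.ext h)
  obtain ⟨θ, hθdef⟩ : ∃ v : L, v = u - (σ ^ 2) u := ⟨_, rfl⟩
  have hθne : θ ≠ 0 := hθdef ▸ sub_ne_zero.mpr (Ne.symm hu)
  have hsq : ∀ x : L, (σ ^ 2) x = σ (σ x) := by
    intro x; rw [pow_two, AlgEquiv.mul_apply]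
  have hσ4x : ∀ x : L, σ (σ (σ (σ x))) = x := by
    intro x
    have h : (σ ^ 4) x = x := by rw [hσ4]; rfl
    rw [show σ ^ 4 = σ * σ * σ * σ by
      rw [pow_succ, pow_succ, pow_succ, pow_one]] at h
    simpa [AlgEquiv.mul_apply] using h
  have hθ2 : σ (σ θ) = -θ := by
    rw [hθdef, map_sub, map_sub, ← hsq, hsq u, hσ4x u]
    ring
  have hσθne : σ θ ≠ 0 := fun h => hθne (by simpa using congrArg σ.symm h)
  obtain ⟨y, hydef⟩ : ∃ v : L, v = σ θ / θ := ⟨_, rfl⟩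
  have hσy : σ y = -θ / σ θ := by rw [hydef, map_div₀, hθ2]
  have hynorm : y * σ y = -1 := by
    rw [hσy, hydef]
    field_simp
  have hy2 : σ (σ y) = y := by
    rw [hσy, map_div₀, map_neg, hθ2, hydef]
    rw [div_neg, ← neg_div, neg_neg]
  obtain ⟨P, hP⟩ : ∃ c : k, algebraMap k L c = y + σ y := by
    apply hfix
    rw [map_add, hy2]
    ring
  obtain ⟨Q, hQ⟩ : ∃ c : k, algebraMap k L c = (y - σ y) / s₀ := by
    apply hfix
    rw [map_div₀, map_sub, hy2, hσs₀]
    rw [div_neg, ← neg_div, neg_sub]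
  have hQs : algebraMap k L Q * s₀ = y - σ y := by
    rw [hQ, div_mul_cancel₀ _ hs₀ne]
  have hkey : P ^ 2 - Q ^ 2 * D = -4 := by
    apply (algebraMap k L).injective
    rw [map_sub, map_mul, map_pow, map_pow, hD, hP, map_neg, map_ofNat]
    linear_combination 4 * hynorm - (algebraMap k L Q * s₀ + y - σ y) * hQs
  by_cases hQ0 : Q = 0
  · rw [hQ0] at hkey
    set i : k := P / 2 with hidef
    have hi2 : i ^ 2 = -1 := by
      rw [hidef, div_pow, div_eq_iff (pow_ne_zero 2 h2)]
      linear_combination hkey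
    have hine : i ≠ 0 := by
      intro h
      rw [h] at hi2
      have h0 : (-1 : k) = 0 := by rw [← hi2]; ring
      exact one_ne_zero (neg_eq_zero.mp h0)
    have hDne1 : D ≠ 1 := fun h => hDnonsq 1 (by rw [one_pow, h])
    have hDnem1 : D ≠ -1 := fun h => hDnonsq i (by rw [hi2, h])
    refine ⟨(D + 1) / 2, i * (D - 1) / 2, ?_, ?_, ?_⟩
    · intro h
      have h' := (div_eq_zero_iff.mp h).resolve_right h2
      exact hDnem1 (eq_neg_of_add_eq_zero_left h')
    · intro h
      have h' := (div_eq_zero_iff.mp h).resolve_right h2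
      rcases mul_eq_zero.mp h' with h'' | h''
      · exact hine h''
      · exact hDne1 (sub_eq_zero.mp h'')
    · rw [div_pow, div_pow, ← add_div, eq_div_iff (pow_ne_zero 2 h2)]
      linear_combination (-(D - 1) ^ 2) * hi2
  · refine ⟨P / Q, 2 / Q, ?_, ?_, ?_⟩
    · intro h
      have hP0 : P = 0 := (div_eq_zero_iff.mp h).resolve_right hQ0
      apply hDnonsq (2 / Q)
      rw [hP0] at hkey
      rw [div_pow, div_eq_iff (pow_ne_zero 2 hQ0)]
      linear_combination hkey
    · exact div_ne_zero h2 hQ0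
    · rw [div_pow, div_pow, ← add_div, eq_div_iff (pow_ne_zero 2 hQ0)]
      linear_combination -hkey
end

section
/- Let k be a field of characteristic not 2 and L = k(√α) a quadratic extension where α ∈ k^× is not a sum of squares in k. Then the Dress map h_{L/k} : A(ℤ/2ℤ) → GW(k) is injective. -/
open scoped Classical in
/-- The "mark vector" of the `G`-set `G/H`: the function sending a subgroup `K` to
the number of `K`-fixed points of `G/H`. -/
noncomputable def mark {G : Type} [Group G] (H : Subgroup G) : Subgroup G → ℤ :=
  fun K => (Nat.card (MulAction.fixedPoints K (G ⧸ H)) : ℤ)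

/-- The Burnside ring `A(G)` of a finite group `G`, realized via the (injective) mark
homomorphism as the subring of `∏_{K ≤ G} ℤ` generated by the marks of the transitive
`G`-sets `G/H`. -/
noncomputable def BurnsideRing (G : Type) [Group G] : Subring (Subgroup G → ℤ) :=
  Subring.closure (Set.range (mark (G := G)))

/-- The basis element `[G/H]` of the Burnside ring `A(G)`. -/
noncomputable def burnsideElt {G : Type} [Group G] (H : Subgroup G) : BurnsideRing G :=
  ⟨mark H, Subring.subset_closure ⟨H, rfl⟩⟩

/-- `x ∈ GW k` is the class of the quadratic form `q`: `q` is isometric to a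
diagonal form `⟨d₁, …, d_m⟩` and `x = ⟨d₁⟩ + ⋯ + ⟨d_m⟩`. -/
def IsGWClassOf (k : Type) [Field k] {V : Type} [AddCommGroup V] [Module k V]
    (q : QuadraticForm k V) (x : GW k) : Prop :=
  ∃ (m : ℕ) (d : Fin m → kˣ),
    QuadraticMap.Equivalent q (QuadraticMap.weightedSumSquares k fun i => (d i : k)) ∧
    x = ∑ i, GWform k (d i)

/-- `h` is the Dress map `A(G) → GW(k)` of the Galois extension `L/k`:
the ring homomorphism sending the class `[G/H]` to the class in `GW(k)` of the trace
form `x ↦ tr_{L^H/k}(x²)` of the fixed field `L^H`. -/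
def IsDressMap (k L : Type) [Field k] [Field L] [Algebra k L]
    (h : BurnsideRing (L ≃ₐ[k] L) →+* GW k) : Prop :=
  ∀ H : Subgroup (L ≃ₐ[k] L),
    IsGWClassOf k (Algebra.traceForm k (IntermediateField.fixedField H)).toQuadraticMap
      (h (burnsideElt H))


section Ordering

variable {k : Type} [Field k]

structure MyIsPreordering (T : Set k) : Prop where
  add_mem : ∀ {a b : k}, a ∈ T → b ∈ T → a + b ∈ T
  mul_mem : ∀ {a b : k}, a ∈ T → b ∈ T → a * b ∈ T
  sq_mem : ∀ a : k, a * a ∈ T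
  neg_one_not_mem : (-1 : k) ∉ T

namespace MyIsPreordering

variable {T : Set k}

lemma zero_mem (hT : MyIsPreordering T) : (0 : k) ∈ T := by simpa using hT.sq_mem 0
lemma one_mem (hT : MyIsPreordering T) : (1 : k) ∈ T := by simpa using hT.sq_mem 1

lemma mem_of_mul_mem (hT : MyIsPreordering T) {a b : k} (hab : a * b ∈ T) (hb : b ∈ T) (hb0 : b ≠ 0) : a ∈ T := by
  have : a = (a * b) * b * (b⁻¹ * b⁻¹) := by field_simp
  rw [this]
  exact hT.mul_mem (hT.mul_mem hab hb) (hT.sq_mem _)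

lemma not_mem_and_neg_mem (hT : MyIsPreordering T) {a : k} (ha : a ≠ 0) (h1 : a ∈ T) (h2 : -a ∈ T) : False := by
  have : (-1 : k) = (a * -a) * (a⁻¹ * a⁻¹) := by field_simp
  exact hT.neg_one_not_mem (this ▸ hT.mul_mem (hT.mul_mem h1 h2) (hT.sq_mem _))

lemma mem_or_neg_mem_of_max (hT : MyIsPreordering T)
    (hmax : ∀ T' : Set k, MyIsPreordering T' → T ⊆ T' → T' = T) (a : k) :
    a ∈ T ∨ -a ∈ T := by
  by_contra hc
  push_neg at hc
  obtain ⟨h1, h2⟩ := hc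
  set T' : Set k := {x : k | ∃ p ∈ T, ∃ q ∈ T, x = p + a * q} with hT'def
  have hsub : T ⊆ T' := fun p hp => ⟨p, hp, 0, hT.zero_mem, by ring⟩
  have hT' : MyIsPreordering T' := by
    constructor
    · rintro x y ⟨p, hp, q, hq, rfl⟩ ⟨p', hp', q', hq', rfl⟩
      exact ⟨p + p', hT.add_mem hp hp', q + q', hT.add_mem hq hq', by ring⟩
    · rintro x y ⟨p, hp, q, hq, rfl⟩ ⟨p', hp', q', hq', rfl⟩
      refine ⟨p * p' + (a * a) * (q * q'), hT.add_mem (hT.mul_mem hp hp')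
        (hT.mul_mem (hT.sq_mem a) (hT.mul_mem hq hq')), p * q' + q * p',
        hT.add_mem (hT.mul_mem hp hq') (hT.mul_mem hq hp'), by ring⟩
    · exact fun x => hsub (hT.sq_mem x)
    · rintro ⟨p, hp, q, hq, hpq⟩
      rcases eq_or_ne q 0 with rfl | hq0
      · exact hT.neg_one_not_mem (by rw [hpq]; simpa using hp)
      · apply h2
        have : -a = (1 + p) * q * (q⁻¹ * q⁻¹) := by
          field_simp
          linear_combination hpq
        rw [this]
        exact hT.mul_mem (hT.mul_mem (hT.add_mem hT.one_mem hp) hq) (hT.sq_mem _)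
  exact h1 ((hmax T' hT' hsub) ▸ ⟨0, hT.zero_mem, 1, hT.one_mem, by ring⟩)

end MyIsPreordering

private lemma isSumSq_mul_sq {R : Type*} [CommRing R] {b : R} (x : R) (hb : IsSumSq b) :
    IsSumSq (x * x * b) := by
  induction hb with
  | zero => simpa using IsSumSq.zero
  | @sq_add y S hS ih =>
      have : x * x * (y * y + S) = (x * y) * (x * y) + x * x * S := by ring
      rw [this]; exact IsSumSq.sq_add _ ih

private lemma IsSumSq.mul' {R : Type*} [CommRing R] {a b : R} (ha : IsSumSq a) (hb : IsSumSq b) :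
    IsSumSq (a * b) := by
  induction ha with
  | zero => simpa using IsSumSq.zero
  | @sq_add x S hS ih =>
      have : (x * x + S) * b = x * x * b + S * b := by ring
      rw [this]; exact IsSumSq.add (isSumSq_mul_sq x hb) ih

/-- Existence of an ordering of `k` in which `α` is negative. -/
theorem exists_ordering (h2 : (2 : k) ≠ 0) (α : k) (hss : ¬ IsSumSq α) :
    ∃ T : Set k, MyIsPreordering T ∧ (∀ a : k, a ∈ T ∨ -a ∈ T) ∧ -α ∈ T := by
  -- the base preordering
  set T₀ : Set k := {x : k | ∃ u v : k, IsSumSq u ∧ IsSumSq v ∧ x = u - α * v} with hT₀def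
  have hT₀ : MyIsPreordering T₀ := by
    constructor
    · rintro x y ⟨u, v, hu, hv, rfl⟩ ⟨u', v', hu', hv', rfl⟩
      exact ⟨u + u', v + v', hu.add hu', hv.add hv', by ring⟩
    · rintro x y ⟨u, v, hu, hv, rfl⟩ ⟨u', v', hu', hv', rfl⟩
      refine ⟨u * u' + (α * α) * (v * v'), u * v' + v * u', ?_, ?_, by ring⟩
      · exact (hu.mul' hu').add (isSumSq_mul_sq α (hv.mul' hv'))
      · exact (hu.mul' hv').add (hv.mul' hu')
    · exact fun a => ⟨a * a, 0, by simpa using IsSumSq.sq_add a IsSumSq.zero, IsSumSq.zero,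
        by ring⟩
    · rintro ⟨u, v, hu, hv, huv⟩
      -- -1 = u - α v
      rcases eq_or_ne v 0 with rfl | hv0
      · -- -1 is a sum of squares, so α is
        have hm1 : IsSumSq (-1 : k) := by rw [huv]; simpa using hu
        apply hss
        have : α = ((α + 1) / 2) * ((α + 1) / 2) + (-1) * (((α - 1) / 2) * ((α - 1) / 2)) := by
          field_simp; ring
        rw [this]
        refine IsSumSq.add ?_ (hm1.mul' ?_)
        · simpa using IsSumSq.sq_add ((α + 1) / 2) IsSumSq.zero
        · simpa using IsSumSq.sq_add ((α - 1) / 2) IsSumSq.zero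
      · apply hss
        have : α = (1 + u) * v * (v⁻¹ * v⁻¹) := by
          field_simp
          linear_combination huv
        rw [this]
        refine IsSumSq.mul' (IsSumSq.mul' ?_ hv) ?_
        · have h1 : IsSumSq (1 : k) := by simpa using IsSumSq.sq_add (1:k) IsSumSq.zero
          exact h1.add hu
        · simpa using IsSumSq.sq_add v⁻¹ IsSumSq.zero
  have hαT₀ : -α ∈ T₀ := ⟨0, 1, IsSumSq.zero, by simpa using IsSumSq.sq_add (1:k) IsSumSq.zero,
    by ring⟩
  -- Zorn
  obtain ⟨T, hT₀T, hmax⟩ := zorn_subset_nonempty {T : Set k | MyIsPreordering T}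
    (fun c hc hchain hne => by
      refine ⟨⋃₀ c, ?_, fun s hs => Set.subset_sUnion_of_mem hs⟩
      obtain ⟨t₀, ht₀⟩ := hne
      constructor
      · rintro a b ⟨ta, hta, haa⟩ ⟨tb, htb, hbb⟩
        rcases hchain.total hta htb with hle | hle
        · exact ⟨tb, htb, (hc htb).add_mem (hle haa) hbb⟩
        · exact ⟨ta, hta, (hc hta).add_mem haa (hle hbb)⟩
      · rintro a b ⟨ta, hta, haa⟩ ⟨tb, htb, hbb⟩
        rcases hchain.total hta htb with hle | hle
        · exact ⟨tb, htb, (hc htb).mul_mem (hle haa) hbb⟩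
        · exact ⟨ta, hta, (hc hta).mul_mem haa (hle hbb)⟩
      · exact fun a => ⟨t₀, ht₀, (hc ht₀).sq_mem a⟩
      · rintro ⟨t, ht, hmem⟩
        exact (hc ht).neg_one_not_mem hmem)
    T₀ hT₀
  refine ⟨T, hmax.prop, fun a => hmax.prop.mem_or_neg_mem_of_max (fun T' hT' hsub =>
    hmax.eq_of_ge hT' hsub) a, hT₀T hαT₀⟩


section GWHoms

variable {k : Type} [Field k]

noncomputable def gwLift (F : kˣ →* ℤ)
    (hsq : ∀ a : kˣ, F (a * a) = 1)
    (hrel : ∀ a b c : kˣ, ((a : k) + (b : k) = (c : k)) → F a + F b = F c + F (c * a * b)) :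
    GW k →+* ℤ :=
  Ideal.Quotient.lift (GWIdeal k) ((MonoidAlgebra.lift ℤ ℤ kˣ F).toRingHom) (by
    intro x hx
    have hle : GWIdeal k ≤ RingHom.ker ((MonoidAlgebra.lift ℤ ℤ kˣ F).toRingHom) := by
      rw [GWIdeal, Ideal.span_le]
      rintro y (⟨a, rfl⟩ | ⟨a, b, c, habc, rfl⟩) <;>
        simp only [SetLike.mem_coe, RingHom.mem_ker, map_sub, map_add, map_one,
          AlgHom.toRingHom_eq_coe, RingHom.coe_coe, MonoidAlgebra.lift_of]
      · rw [hsq a]; ring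
      · have := hrel a b c habc
        omega
    exact hle hx)

@[simp] lemma gwLift_GWform (F : kˣ →* ℤ) (hsq) (hrel) (a : kˣ) :
    gwLift F hsq hrel (GWform k a) = F a := by
  have h1 : gwLift F hsq hrel (GWform k a)
      = (MonoidAlgebra.lift ℤ ℤ kˣ F) (MonoidAlgebra.of ℤ kˣ a) := rfl
  rw [h1, MonoidAlgebra.lift_of]

/-- The dimension homomorphism `GW k → ℤ`. -/
noncomputable def gwDim : GW k →+* ℤ :=
  gwLift 1 (fun _ => rfl) (fun _ _ _ _ => rfl)

@[simp] lemma gwDim_GWform (a : kˣ) : gwDim (GWform k a) = 1 := gwLift_GWform _ _ _ a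

section Sgn

open scoped Classical

variable (T : Set k) (hT : MyIsPreordering T) (htot : ∀ a : k, a ∈ T ∨ -a ∈ T)
include hT htot

noncomputable def sgnFun (a : kˣ) : ℤ := if (a : k) ∈ T then 1 else -1

lemma sgn_mul_aux {a b : kˣ} (hab : ((a : k)) * b ∈ T) (ha : (a : k) ∈ T) : (b : k) ∈ T := by
  have := hT.mem_of_mul_mem (a := (b : k)) (b := (a : k)) (by rwa [mul_comm]) ha a.ne_zero
  exact this

lemma sgnFun_mul (a b : kˣ) : sgnFun T (a * b) = sgnFun T a * sgnFun T b := by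
  have hcoe : ((a * b : kˣ) : k) = (a : k) * b := rfl
  by_cases ha : (a : k) ∈ T <;> by_cases hb : (b : k) ∈ T <;>
    simp only [sgnFun, ha, hb, if_pos, if_neg, if_true, if_false, hcoe]
  · rw [if_pos (hT.mul_mem ha hb)]; ring
  · rw [if_neg (fun hab => hb (sgn_mul_aux T hT htot hab ha))]; ring
  · rw [if_neg (fun hab => ha (sgn_mul_aux T hT htot (by rwa [mul_comm]) hb))]; ring
  · have ha' : -(a : k) ∈ T := (htot _).resolve_left ha
    have hb' : -(b : k) ∈ T := (htot _).resolve_left hb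
    rw [if_pos (by simpa using hT.mul_mem ha' hb')]; ring

noncomputable def sgnMonoidHom : kˣ →* ℤ where
  toFun := sgnFun T
  map_one' := by simp [sgnFun, hT.one_mem]
  map_mul' := sgnFun_mul T hT htot

lemma not_mem_neg (a : kˣ) (ha : -(a : k) ∈ T) : (a : k) ∉ T :=
  fun h => hT.not_mem_and_neg_mem a.ne_zero h ha

lemma sgnMonoidHom_sq (a : kˣ) : sgnMonoidHom T hT htot (a * a) = 1 := by
  have h : ((a : k)) * a ∈ T := hT.sq_mem (a : k)
  simp [sgnMonoidHom, sgnFun, Units.val_mul, h]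

lemma sgnMonoidHom_rel (a b c : kˣ) (habc : (a : k) + (b : k) = (c : k)) :
    sgnMonoidHom T hT htot a + sgnMonoidHom T hT htot b =
      sgnMonoidHom T hT htot c + sgnMonoidHom T hT htot (c * a * b) := by
  have hmul' : sgnMonoidHom T hT htot (c * a * b) =
      sgnMonoidHom T hT htot c * sgnMonoidHom T hT htot a * sgnMonoidHom T hT htot b := by
    rw [map_mul, map_mul]
  by_cases ha : (a : k) ∈ T <;> by_cases hb : (b : k) ∈ T
  · have hc : (c : k) ∈ T := habc ▸ hT.add_mem ha hb
    have hcab : ((c : k)) * a * b ∈ T := hT.mul_mem (hT.mul_mem hc ha) hb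
    simp [sgnMonoidHom, sgnFun, Units.val_mul, ha, hb, hc, hcab]
  · have hsa : sgnFun T a = 1 := if_pos ha
    have hsb : sgnFun T b = -1 := if_neg hb
    rw [hmul']
    show sgnFun T a + sgnFun T b = sgnFun T c + sgnFun T c * sgnFun T a * sgnFun T b
    rw [hsa, hsb]; ring
  · have hsa : sgnFun T a = -1 := if_neg ha
    have hsb : sgnFun T b = 1 := if_pos hb
    rw [hmul']
    show sgnFun T a + sgnFun T b = sgnFun T c + sgnFun T c * sgnFun T a * sgnFun T b
    rw [hsa, hsb]; ring
  · have ha' : -(a : k) ∈ T := (htot _).resolve_left ha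
    have hb' : -(b : k) ∈ T := (htot _).resolve_left hb
    have hc' : -(c : k) ∈ T := by
      have := hT.add_mem ha' hb'
      rwa [show -(a:k) + -(b:k) = -(c:k) by rw [← habc]; ring] at this
    have hc : (c : k) ∉ T := not_mem_neg T hT htot c hc'
    rw [hmul']
    show sgnFun T a + sgnFun T b = sgnFun T c + sgnFun T c * sgnFun T a * sgnFun T b
    have hsa : sgnFun T a = -1 := if_neg ha
    have hsb : sgnFun T b = -1 := if_neg hb
    have hsc : sgnFun T c = -1 := if_neg hc
    rw [hsa, hsb, hsc]; ring

/-- The signature homomorphism `GW k → ℤ` attached to an ordering `T`. -/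
noncomputable def gwSgn : GW k →+* ℤ :=
  gwLift (sgnMonoidHom T hT htot) (sgnMonoidHom_sq T hT htot) (sgnMonoidHom_rel T hT htot)

@[simp] lemma gwSgn_GWform (a : kˣ) :
    gwSgn T hT htot (GWform k a) = if (a : k) ∈ T then 1 else -1 :=
  gwLift_GWform _ _ _ a

end Sgn

end GWHoms


section Burnside

variable {G : Type} [Group G]

lemma mark_top_eq_one : mark (⊤ : Subgroup G) = 1 := by
  funext K
  have hsub : Subsingleton (G ⧸ (⊤ : Subgroup G)) := QuotientGroup.subsingleton_quotient_top
  have hfix : MulAction.fixedPoints K (G ⧸ (⊤ : Subgroup G)) = Set.univ := by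
    ext x
    simp only [Set.mem_univ, iff_true, MulAction.mem_fixedPoints]
    exact fun g => Subsingleton.elim _ _
  have : Nat.card (MulAction.fixedPoints K (G ⧸ (⊤ : Subgroup G))) = 1 := by
    rw [hfix]
    have : Nonempty (G ⧸ (⊤ : Subgroup G)) := ⟨(1 : G)⟩
    simpa using Nat.card_unique (α := G ⧸ (⊤ : Subgroup G))
  simp [mark, this]

lemma mark_bot_bot : mark (⊥ : Subgroup G) (⊥ : Subgroup G) = (Nat.card G : ℤ) := by
  have hfix : MulAction.fixedPoints (⊥ : Subgroup G) (G ⧸ (⊥ : Subgroup G)) = Set.univ := by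
    ext x
    simp only [Set.mem_univ, iff_true, MulAction.mem_fixedPoints]
    rintro ⟨g, hg⟩
    have hg1 : g = 1 := by simpa using hg
    subst hg1
    exact one_smul _ _
  rw [mark, hfix]
  congr 1
  exact (Nat.card_congr (Equiv.Set.univ _)).trans
    (Nat.card_congr (QuotientGroup.quotientBot (G := G)).toEquiv)

lemma mark_bot_ne {K : Subgroup G} (hK : K ≠ ⊥) : mark (⊥ : Subgroup G) K = 0 := by
  obtain ⟨σ, hσK, hσ⟩ := K.bot_or_exists_ne_one.resolve_left hK
  have hfix : MulAction.fixedPoints K (G ⧸ (⊥ : Subgroup G)) = ∅ := by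
    ext x
    simp only [Set.mem_empty_iff_false, iff_false, MulAction.mem_fixedPoints]
    intro hx
    obtain ⟨g, rfl⟩ := QuotientGroup.mk_surjective x
    have := hx ⟨σ, hσK⟩
    rw [show (⟨σ, hσK⟩ : K) • (QuotientGroup.mk g : G ⧸ (⊥ : Subgroup G))
        = QuotientGroup.mk (σ * g) from rfl] at this
    rw [QuotientGroup.eq] at this
    apply hσ
    have : (σ * g)⁻¹ * g = 1 := by simpa using this
    have hσg : σ * g = g := by
      have := congrArg (fun x => (σ * g) * x) this
      simpa [mul_assoc] using this.symm
    calc σ = (σ * g) * g⁻¹ := by group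
    _ = g * g⁻¹ := by rw [hσg]
    _ = 1 := by group
  rw [mark, hfix]
  simp

lemma subgroup_eq_bot_or_top (hG : Nat.card G = 2) (H : Subgroup G) : H = ⊥ ∨ H = ⊤ := by
  have : Finite G := Nat.finite_of_card_ne_zero (by omega)
  have hdvd : Nat.card H ∣ 2 := hG ▸ Subgroup.card_subgroup_dvd_card H
  rcases (Nat.prime_two.eq_one_or_self_of_dvd _ hdvd) with h1 | h2
  · exact Or.inl (Subgroup.eq_bot_of_card_eq H h1)
  · exact Or.inr (Subgroup.eq_top_of_card_eq H (by rw [h2, hG]))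

lemma burnside_decomp (hG : Nat.card G = 2) {z : Subgroup G → ℤ} (hz : z ∈ BurnsideRing G) :
    ∃ a b : ℤ, ∀ K, z K = a + b * mark (⊥ : Subgroup G) K := by
  have hEsq : ∀ K, mark (⊥ : Subgroup G) K * mark ⊥ K = 2 * mark ⊥ K := by
    intro K
    rcases eq_or_ne K ⊥ with rfl | hK
    · rw [mark_bot_bot, hG]; norm_num
    · rw [mark_bot_ne hK]; ring
  induction hz using Subring.closure_induction with
  | mem x hx =>
      obtain ⟨H, rfl⟩ := hx
      rcases subgroup_eq_bot_or_top hG H with rfl | rfl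
      · exact ⟨0, 1, fun K => by ring⟩
      · exact ⟨1, 0, fun K => by rw [mark_top_eq_one]; simp⟩
  | zero => exact ⟨0, 0, fun K => by simp⟩
  | one => exact ⟨1, 0, fun K => by simp⟩
  | add x y hx hy ihx ihy =>
      obtain ⟨a, b, hab⟩ := ihx
      obtain ⟨a', b', hab'⟩ := ihy
      exact ⟨a + a', b + b', fun K => by
        have h1 := hab K; have h2 := hab' K
        show x K + y K = _
        rw [h1, h2]; ring⟩
  | neg x hx ihx =>
      obtain ⟨a, b, hab⟩ := ihx
      exact ⟨-a, -b, fun K => by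
        have h1 := hab K
        show -(x K) = _
        rw [h1]; ring⟩
  | mul x y hx hy ihx ihy =>
      obtain ⟨a, b, hab⟩ := ihx
      obtain ⟨a', b', hab'⟩ := ihy
      exact ⟨a * a', a * b' + b * a' + 2 * b * b', fun K => by
        have h1 := hab K; have h2 := hab' K
        show x K * y K = _
        rw [h1, h2]
        linear_combination (b * b') * hEsq K⟩

end Burnside

section Entries

variable {k : Type} [Field k] [Invertible (2 : k)]

lemma toMatrix'_diag (Q : QuadraticForm k (Fin 2 → k)) (i : Fin 2) :
    Q.toMatrix' i i = Q (Pi.single i 1) := by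
  rw [QuadraticForm.toMatrix', LinearMap.toMatrix₂'_apply]
  exact QuadraticMap.associated_eq_self_apply k Q _

lemma toMatrix'_off (Q : QuadraticForm k (Fin 2 → k)) (i j : Fin 2) (v : k)
    (hv : Q (Pi.single i 1 + Pi.single j 1) - Q (Pi.single i 1) - Q (Pi.single j 1) = 2 * v) :
    Q.toMatrix' i j = v := by
  rw [QuadraticForm.toMatrix', LinearMap.toMatrix₂'_apply]
  have h := LinearMap.congr_fun (LinearMap.congr_fun
    (QuadraticMap.two_nsmul_associated k Q) (Pi.single i 1)) (Pi.single j 1)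
  simp only [LinearMap.smul_apply, QuadraticMap.polarBilin_apply_apply, QuadraticMap.polar,
    nsmul_eq_mul, Nat.cast_ofNat] at h
  have h2 : (2 : k) ≠ 0 := Invertible.ne_zero 2
  apply mul_left_cancel₀ h2
  rw [h, hv]

end Entries

set_option maxHeartbeats 1000000 in
set_option synthInstance.maxHeartbeats 400000 in
/-- If `L = k(√α)` is a quadratic extension (char `k` ≠ 2) with `α ∈ kˣ` not a sum of
squares in `k`, then the Dress map `A(ℤ/2ℤ) = A(Gal(L/k)) → GW(k)` is injective. -/
theorem stmt14 (k L : Type) [Field k] [Field L] [Algebra k L]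
    [FiniteDimensional k L] [IsGalois k L] (h2 : (2 : k) ≠ 0)
    (α : k) (hα : α ≠ 0) (hss : ¬ IsSumSq α)
    (s : L) (hs : s ^ 2 = algebraMap k L α) (hgen : Algebra.adjoin k {s} = ⊤)
    (hdeg : Module.finrank k L = 2)
    (h : BurnsideRing (L ≃ₐ[k] L) →+* GW k) (hD : IsDressMap k L h) :
    Function.Injective h := by
  classical
  haveI : Invertible (2 : k) := invertibleOfNonzero h2
  have hinj : Function.Injective (algebraMap k L) := (algebraMap k L).injective
  -- the ordering
  obtain ⟨T, hT, htot, hαT⟩ := exists_ordering h2 α hss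
  have hαnT : α ∉ T := fun hmem => hT.not_mem_and_neg_mem hα hmem hαT
  -- Galois group size
  have hcard2 : Fintype.card (L ≃ₐ[k] L) = 2 := by
    rw [← Nat.card_eq_fintype_card, IsGalois.card_aut_eq_finrank, hdeg]
  have hcardG : Nat.card (L ≃ₐ[k] L) = 2 := by
    rw [Nat.card_eq_fintype_card, hcard2]
  -- s is not in the base field
  have hsn : ∀ t : k, s ≠ algebraMap k L t := by
    intro t ht
    have hb : Algebra.adjoin k {s} ≤ ⊥ := Algebra.adjoin_le (by
      intro x hx
      rw [Set.mem_singleton_iff] at hx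
      rw [hx]
      show s ∈ (⊥ : Subalgebra k L)
      rw [Algebra.mem_bot]
      exact ⟨t, ht.symm⟩)
    rw [hgen] at hb
    have hbt : (⊥ : Subalgebra k L) = ⊤ := le_antisymm le_top (fun x _ => hb trivial)
    have h1 := Subalgebra.bot_eq_top_iff_finrank_eq_one.mp hbt
    rw [hdeg] at h1
    omega
  -- the basis (1, s) of L over k
  have hli : LinearIndependent k ![(1 : L), s] := by
    rw [LinearIndependent.pair_iff' one_ne_zero]
    intro a
    rw [← Algebra.algebraMap_eq_smul_one]
    exact (hsn a).symm
  set bL : Module.Basis (Fin 2) k L := basisOfLinearIndependentOfCardEqFinrank hli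
    (by rw [hdeg]; simp) with hbLdef
  have hbL : ⇑bL = ![(1 : L), s] := coe_basisOfLinearIndependentOfCardEqFinrank hli _
  have hbL0 : bL 0 = 1 := by rw [hbL]; rfl
  have hbL1 : bL 1 = s := by rw [hbL]; rfl
  -- the nontrivial automorphism, and trace of s
  obtain ⟨σ, hσ1⟩ := Fintype.exists_ne_of_one_lt_card (by omega : 1 < Fintype.card (L ≃ₐ[k] L))
    (1 : L ≃ₐ[k] L)
  have hσs : σ s = -s := by
    have hsq : σ s ^ 2 = s ^ 2 := by
      rw [← map_pow, hs, AlgEquiv.commutes]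
    have h1 : (σ s - s) * (σ s + s) = 0 := by ring_nf; linear_combination hsq
    rcases mul_eq_zero.mp h1 with hc | hc
    · exfalso
      apply hσ1
      have hfix : σ s = s := by linear_combination hc
      have hle : Algebra.adjoin k {s} ≤ AlgHom.equalizer (σ : L →ₐ[k] L) (AlgHom.id k L) :=
        AlgHom.adjoin_le_equalizer _ _ (by
          intro x hx
          rw [Set.mem_singleton_iff] at hx
          subst hx
          simpa using hfix)
      rw [hgen] at hle
      ext x
      have := hle (show x ∈ (⊤ : Subalgebra k L) from trivial)
      rw [AlgHom.mem_equalizer] at this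
      simpa using this
    · linear_combination hc
  have htrs : Algebra.trace k L s = 0 := by
    have hsum := trace_eq_sum_automorphisms (K := k) s
    have huniv : (Finset.univ : Finset (L ≃ₐ[k] L)) = {1, σ} := by
      symm
      apply Finset.eq_univ_of_card
      rw [Finset.card_insert_of_notMem (by simpa using hσ1.symm), Finset.card_singleton, hcard2]
    rw [huniv, Finset.sum_insert (by simpa using hσ1.symm), Finset.sum_singleton] at hsum
    apply hinj
    rw [hsum, map_zero, hσs]
    simp
  have htr1 : Algebra.trace k L 1 = 2 := by
    have := Algebra.trace_algebraMap (S := L) (1 : k)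
    rw [map_one, hdeg] at this
    rw [this]; simp
  have htrss : Algebra.trace k L (s * s) = 2 * α := by
    have h1 : s * s = algebraMap k L α := by rw [← hs]; ring
    rw [h1, Algebra.trace_algebraMap, hdeg]
    push_cast
    ring
  -- the fixed field of ⊥ is ⊤
  have hVtop : IntermediateField.fixedField (⊥ : Subgroup (L ≃ₐ[k] L)) = ⊤ := by
    rw [eq_top_iff]
    exact (IntermediateField.le_iff_le _ _).mpr bot_le
  set V := IntermediateField.fixedField (⊥ : Subgroup (L ≃ₐ[k] L)) with hVdef
  set E : V ≃ₐ[k] L := (IntermediateField.equivOfEq hVtop).trans IntermediateField.topEquiv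
    with hEdef
  have hFV : Module.finrank k V = 2 := by
    rw [E.toLinearEquiv.finrank_eq, hdeg]
  -- the Dress data at ⊥
  obtain ⟨m, d, hEquiv, hsum⟩ := hD ⊥
  have hm : m = 2 := by
    obtain ⟨f⟩ := hEquiv
    have h1 := f.toLinearEquiv.finrank_eq
    rw [hFV, Module.finrank_pi] at h1
    simpa using h1.symm
  subst hm
  -- set up the two quadratic forms on Fin 2 → k
  set Q1 : QuadraticForm k (Fin 2 → k) :=
    QuadraticMap.weightedSumSquares k (fun i => ((d i : kˣ) : k)) with hQ1def
  obtain ⟨f⟩ := hEquiv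
  set ι : V ≃ₗ[k] L := E.toLinearEquiv with hιdef
  set bV : Module.Basis (Fin 2) k V := bL.map ι.symm with hbVdef
  set g : V ≃ₗ[k] (Fin 2 → k) := bV.equivFun with hgdef
  set A : (Fin 2 → k) →ₗ[k] (Fin 2 → k) := (g.symm.trans f.toLinearEquiv).toLinearMap with hAdef
  set Q' : QuadraticForm k (Fin 2 → k) := Q1.comp A with hQ'def
  -- values of Q'
  have hA : ∀ x, A x = f.toLinearEquiv (g.symm x) := by
    intro x
    rw [hAdef]
    simp [LinearEquiv.trans_apply]
  have hfc : ∀ v : V, f.toLinearEquiv v = f v := fun _ => rfl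
  have hQ'val : ∀ x, Q' x = Algebra.trace k L (E (g.symm x) * E (g.symm x)) := by
    intro x
    rw [hQ'def, QuadraticMap.comp_apply, hA, hfc, f.map_app]
    rw [LinearMap.BilinMap.toQuadraticMap_apply, Algebra.traceForm_apply]
    rw [← Algebra.trace_eq_of_algEquiv E, map_mul]
  have hgs : ∀ i, g.symm (Pi.single i 1) = bV i := by
    intro i
    rw [hgdef]
    show bV.equivFun.symm (Pi.single i 1) = bV i
    rw [Module.Basis.equivFun_symm_apply]
    simp [Pi.single_apply]
  have hEbV : ∀ i, E (bV i) = bL i := by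
    intro i
    rw [hbVdef, Module.Basis.map_apply]
    exact E.toLinearEquiv.apply_symm_apply (bL i)
  have hQ'single : ∀ i, Q' (Pi.single i 1) = Algebra.trace k L (bL i * bL i) := by
    intro i
    rw [hQ'val, hgs, hEbV]
  -- entries of the matrix of Q'
  have hent00 : Q'.toMatrix' 0 0 = 2 := by
    rw [toMatrix'_diag, hQ'single, hbL0, mul_one, htr1]
  have hent11 : Q'.toMatrix' 1 1 = 2 * α := by
    rw [toMatrix'_diag, hQ'single, hbL1, htrss]
  have hoffval : Q' (Pi.single 0 1 + Pi.single 1 1) - Q' (Pi.single 0 1) - Q' (Pi.single 1 1)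
      = 2 * 0 := by
    have hx0 : g.symm (Pi.single 0 1 + Pi.single 1 1) = bV 0 + bV 1 := by
      rw [map_add, hgs, hgs]
    have hx1 : E (bV 0 + bV 1) = 1 + s := by
      rw [show E (bV 0 + bV 1) = E (bV 0) + E (bV 1) from E.map_add _ _, hEbV, hEbV, hbL0, hbL1]
    rw [hQ'val, hx0, hx1, hQ'single, hQ'single, hbL0, hbL1]
    have hexp : ((1 : L) + s) * ((1 : L) + s) = 1 * 1 + s * s + (2 : k) • s := by
      rw [Algebra.smul_def]
      rw [map_ofNat]
      ring
    rw [hexp, map_add, map_add, map_smul, htrs, smul_zero]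
    ring
  have hent01 : Q'.toMatrix' 0 1 = 0 := toMatrix'_off Q' 0 1 0 hoffval
  have hent10 : Q'.toMatrix' 1 0 = 0 := by
    apply toMatrix'_off Q' 1 0 0
    have hcomm : (Pi.single 1 1 + Pi.single 0 1 : Fin 2 → k) = Pi.single 0 1 + Pi.single 1 1 :=
      add_comm _ _
    rw [hcomm]
    linear_combination hoffval
  have hQ'discr : Q'.discr' = 4 * α := by
    rw [QuadraticForm.discr', Matrix.det_fin_two, hent00, hent11, hent01, hent10]
    ring
  -- entries and discriminant of Q1
  have hQ1val : ∀ x : Fin 2 → k, Q1 x = (d 0 : k) * (x 0 * x 0) + (d 1 : k) * (x 1 * x 1) := by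
    intro x
    rw [hQ1def, QuadraticMap.weightedSumSquares_apply, Fin.sum_univ_two]
    simp [smul_eq_mul]
  have hQ1discr : Q1.discr' = (d 0 : k) * (d 1 : k) := by
    have h00 : Q1.toMatrix' 0 0 = (d 0 : k) := by
      rw [toMatrix'_diag, hQ1val]; simp
    have h11 : Q1.toMatrix' 1 1 = (d 1 : k) := by
      rw [toMatrix'_diag, hQ1val]; simp
    have h01 : Q1.toMatrix' 0 1 = 0 := by
      apply toMatrix'_off Q1 0 1 0
      rw [hQ1val, hQ1val, hQ1val]
      simp [Pi.single_apply]
    have h10 : Q1.toMatrix' 1 0 = 0 := by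
      apply toMatrix'_off Q1 1 0 0
      rw [hQ1val, hQ1val, hQ1val]
      simp [Pi.single_apply]
    rw [QuadraticForm.discr', Matrix.det_fin_two, h00, h11, h01, h10]
    ring
  -- discriminant comparison
  set tA : k := (LinearMap.toMatrix' A).det with htAdef
  have htA0 : tA ≠ 0 := by
    rw [htAdef, LinearMap.det_toMatrix']
    exact IsUnit.ne_zero (LinearEquiv.isUnit_det' (g.symm.trans f.toLinearEquiv))
  have hcomp : Q'.discr' = tA * tA * Q1.discr' := QuadraticForm.discr'_comp (Q := Q1) A
  have h4α : 4 * α = tA * tA * ((d 0 : k) * (d 1 : k)) := by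
    rw [← hQ'discr, hcomp, hQ1discr]
  -- the product of the diagonal entries is not in T
  have hnm : ((d 0 : k)) * (d 1 : k) ∉ T := by
    intro hmem
    apply hαnT
    have hα2 : α = (((d 0 : k)) * (d 1 : k)) * ((tA / 2) * (tA / 2)) := by
      field_simp
      linear_combination h4α
    rw [hα2]
    exact hT.mul_mem hmem (hT.sq_mem _)
  -- signature and dimension of h [G/⊥]
  have hsgnE : gwSgn T hT htot (h (burnsideElt (⊥ : Subgroup (L ≃ₐ[k] L)))) = 0 := by
    rw [hsum, Fin.sum_univ_two, map_add, gwSgn_GWform, gwSgn_GWform]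
    by_cases h0 : ((d 0 : kˣ) : k) ∈ T <;> by_cases h1 : ((d 1 : kˣ) : k) ∈ T
    · exact absurd (hT.mul_mem h0 h1) hnm
    · simp [h0, h1]
    · simp [h0, h1]
    · exfalso
      have := hT.mul_mem ((htot _).resolve_left h0) ((htot _).resolve_left h1)
      rw [neg_mul_neg] at this
      exact hnm this
  have hdimE : gwDim (h (burnsideElt (⊥ : Subgroup (L ≃ₐ[k] L)))) = 2 := by
    rw [hsum, Fin.sum_univ_two, map_add, gwDim_GWform, gwDim_GWform]
    norm_num
  -- final injectivity argument
  intro x y hxy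
  obtain ⟨a, b, hab⟩ := burnside_decomp hcardG (x - y).2
  have hxyE : x - y = a • 1 + b • burnsideElt (⊥ : Subgroup (L ≃ₐ[k] L)) := by
    apply Subtype.ext
    funext K
    have h1 := hab K
    have h2 : ((x - y : BurnsideRing (L ≃ₐ[k] L)) : Subgroup (L ≃ₐ[k] L) → ℤ) K
        = (x - y).1 K := rfl
    rw [h2, h1]
    have h3 : ((a • (1 : BurnsideRing (L ≃ₐ[k] L))
          + b • burnsideElt (⊥ : Subgroup (L ≃ₐ[k] L)) : BurnsideRing (L ≃ₐ[k] L))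
          : Subgroup (L ≃ₐ[k] L) → ℤ)
        = a • (1 : Subgroup (L ≃ₐ[k] L) → ℤ) + b • mark (⊥ : Subgroup (L ≃ₐ[k] L)) := rfl
    rw [h3]
    simp [mul_comm]
  have hz : h (x - y) = 0 := by rw [map_sub, hxy, sub_self]
  rw [hxyE] at hz
  rw [map_add, map_zsmul, map_zsmul, map_one] at hz
  have hz2 := hz
  have hdim0 : a + b * 2 = 0 := by
    have := congrArg gwDim hz2
    rw [map_add, map_zsmul, map_zsmul, map_one, map_zero, hdimE] at this
    simpa [smul_eq_mul] using this
  have hsgn0 : a = 0 := by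
    have := congrArg (gwSgn T hT htot) hz2
    rw [map_add, map_zsmul, map_zsmul, map_one, map_zero, hsgnE] at this
    simpa [smul_eq_mul] using this
  have hb0 : b = 0 := by omega
  have : x - y = 0 := by
    rw [hxyE, hsgn0, hb0]
    simp
  rw [sub_eq_zero] at this
  exact this
end Ordering
end
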